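/- For every n \ge 1, the edge-bandwidth of the complete bipartite graph K_{n,n} equals \binom{n+1}{2} - 1. -/

import Mathlib

open SimpleGraph

/-- The edge-bandwidth of a finite simple graph: the minimum over injective integer
labelings of the edges of the maximum difference of labels on incident edges. -/
noncomputable def edgeBW {V : Type*} [Fintype V] (G : SimpleGraph V) : ℕ :=
  sInf {k : ℕ | ∃ f : G.edgeSet → ℤ, Function.Injective f ∧
    ∀ e e' : G.edgeSet, e ≠ e' → (∃ v, v ∈ (e : Sym2 V) ∧ v ∈ (e' : Sym2 V)) →
      ((f e - f e').natAbs ≤ k)}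

/-- The bandwidth of a finite simple graph: the minimum over injective integer
labelings of the vertices of the maximum difference of labels on adjacent vertices. -/
noncomputable def bw {V : Type*} [Fintype V] (G : SimpleGraph V) : ℕ :=
  sInf {k : ℕ | ∃ g : V → ℤ, Function.Injective g ∧
    ∀ u v, G.Adj u v → (g u - g v).natAbs ≤ k}

open Finset

namespace EBW

variable {n : ℕ}

/-! ### Basic edge plumbing for the complete bipartite graph -/

lemma adj_edg (i j : Fin n) :
    (completeBipartiteGraph (Fin n) (Fin n)).Adj (Sum.inl i) (Sum.inr j) := by simp

def edg (i j : Fin n) : (completeBipartiteGraph (Fin n) (Fin n)).edgeSet :=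
  ⟨s(Sum.inl i, Sum.inr j), adj_edg i j⟩

lemma edg_inj_iff {i j i' j' : Fin n} : edg i j = edg i' j' ↔ i = i' ∧ j = j' := by
  constructor
  · intro h
    have h2 : s(Sum.inl i, (Sum.inr j : Fin n ⊕ Fin n)) = s(Sum.inl i', Sum.inr j') :=
      congrArg Subtype.val h
    rcases Sym2.eq_iff.1 h2 with ⟨h3, h4⟩ | ⟨h3, h4⟩
    · exact ⟨Sum.inl.inj h3, Sum.inr.inj h4⟩
    · exact absurd h3 (by simp)
  · rintro ⟨rfl, rfl⟩; rfl

lemma edge_repr (e : (completeBipartiteGraph (Fin n) (Fin n)).edgeSet) :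
    ∃ i j, e = edg i j := by
  rcases e with ⟨q, hq⟩
  revert hq
  induction q using Sym2.ind with
  | _ u v =>
    intro hq
    rw [SimpleGraph.mem_edgeSet] at hq
    rcases u with i | i <;> rcases v with j | j
    · simp at hq
    · exact ⟨i, j, rfl⟩
    · exact ⟨j, i, Subtype.ext Sym2.eq_swap⟩
    · simp at hq

lemma mem_edg {v : Fin n ⊕ Fin n} {i j : Fin n} :
    v ∈ (edg i j : Sym2 (Fin n ⊕ Fin n)) ↔ v = Sum.inl i ∨ v = Sum.inr j := Sym2.mem_iff

/-! ### Arithmetic helpers -/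

lemma blk {m a b a' b' : ℕ} (hb : b < m) (hb' : b' < m)
    (h : a*m + b = a'*m + b') : a = a' ∧ b = b' := by
  rcases lt_trichotomy a a' with hlt | rfl | hgt
  · exfalso
    have h1 : (a+1)*m ≤ a'*m := Nat.mul_le_mul_right m (by omega)
    have h2 : (a+1)*m = a*m + m := by ring
    omega
  · omega
  · exfalso
    have h1 : (a'+1)*m ≤ a*m := Nat.mul_le_mul_right m (by omega)
    have h2 : (a'+1)*m = a'*m + m := by ring
    omega

lemma mulb {m c d : ℕ} (h : c < d) : c*m + m ≤ d*m := by
  have h1 : (c+1)*m ≤ d*m := Nat.mul_le_mul_right m (by omega)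
  have h2 : (c+1)*m = c*m + m := by ring
  omega

lemma sq_expand (u v : ℕ) : (u+v)*(u+v) = u*u + 2*(u*v) + v*v := by ring

lemma four_mul_le_sq (u v : ℕ) : 4*(u*v) ≤ (u+v)*(u+v) := by
  have h := sq_expand u v
  have h2 : 2*(u*v) ≤ u*u + v*v := by
    have := two_mul_le_add_sq u v
    have e1 : u^2 = u*u := sq u
    have e2 : v^2 = v*v := sq v
    have e3 : 2*u*v = 2*(u*v) := by ring
    omega
  omega

lemma key_am (a b : ℕ) (ha : a ≤ n) (hb : b ≤ n)
    (hx : (n-1)*(n-1)/4 + 1 ≤ a*b) : (n-a)*(n-b) ≤ n*n/4 := by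
  by_contra h
  push_neg at h
  have h1 : n*n < 4*((n-a)*(n-b)) := by omega
  have h2 : n < (n-a) + (n-b) := by
    by_contra h2
    push_neg at h2
    have h3 : ((n-a)+(n-b))*((n-a)+(n-b)) ≤ n*n := Nat.mul_le_mul h2 h2
    have h4 := four_mul_le_sq (n-a) (n-b)
    omega
  have h3 : a + b + 1 ≤ n := by omega
  have h4 : (a+b)*(a+b) ≤ (n-1)*(n-1) := Nat.mul_le_mul (by omega) (by omega)
  have h5 := four_mul_le_sq a b
  omega

lemma arith_main (hn : 2 ≤ n) :
    n*(n+1)/2 - 1 + ((n-1)*(n-1)/4 + 1) ≤ n*n - n*n/4 := by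
  rcases Nat.even_or_odd n with ⟨m, hm⟩ | ⟨m, hm⟩
  · obtain ⟨m', rfl⟩ : ∃ m', m = m' + 1 := ⟨m - 1, by omega⟩
    subst hm
    have e1 : (m'+1+(m'+1))*((m'+1+(m'+1))+1) = 4*(m'*m') + 10*m' + 6 := by ring
    have hn1 : m'+1+(m'+1) - 1 = 2*m'+1 := by omega
    have e2 : (m'+1+(m'+1)-1)*(m'+1+(m'+1)-1) = 4*(m'*m') + 4*m' + 1 := by
      rw [hn1]; ring
    have e3 : (m'+1+(m'+1))*(m'+1+(m'+1)) = 4*(m'*m') + 8*m' + 4 := by ring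
    omega
  · subst hm
    have hm1 : 1 ≤ m := by omega
    have e1 : (2*m+1)*((2*m+1)+1) = 4*(m*m) + 6*m + 2 := by ring
    have hn1 : 2*m+1 - 1 = 2*m := by omega
    have e2 : (2*m+1-1)*(2*m+1-1) = 4*(m*m) := by rw [hn1]; ring
    have e3 : (2*m+1)*(2*m+1) = 4*(m*m) + 4*m + 1 := by ring
    omega

lemma K_pos (hn : 2 ≤ n) : 1 ≤ n*(n+1)/2 - 1 := by
  have : 2*3 ≤ n*(n+1) := Nat.mul_le_mul hn (by omega)
  omega

/-! ### The lower bound -/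

theorem core_lower (hn : 2 ≤ n) (k : ℕ) (g : Fin n × Fin n → ℤ)
    (hg : Function.Injective g)
    (hline : ∀ p q : Fin n × Fin n, p ≠ q → (p.1 = q.1 ∨ p.2 = q.2) →
      (g p - g q).natAbs ≤ k) :
    n*(n+1)/2 - 1 ≤ k := by
  classical
  set K := n*(n+1)/2 - 1 with hK
  have hcard : (univ : Finset (Fin n × Fin n)).card = n*n := by simp [Finset.card_univ]
  set r : Fin n × Fin n → ℕ := fun p => #(univ.filter (fun q => g q ≤ g p)) with hr
  have R1 : ∀ p, 1 ≤ r p := by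
    intro p
    have h0 : p ∈ univ.filter (fun q => g q ≤ g p) := by simp
    exact Finset.card_pos.2 ⟨p, h0⟩
  have R2 : ∀ p, r p ≤ n*n := by
    intro p
    calc r p ≤ (univ : Finset (Fin n × Fin n)).card := Finset.card_filter_le _ _
    _ = n*n := hcard
  have Rmono : ∀ p q, g p < g q → r p < r q := by
    intro p q h
    apply Finset.card_lt_card
    constructor
    · intro t ht
      simp only [mem_filter, mem_univ, true_and] at *
      omega
    · intro hsub
      have : q ∈ univ.filter (fun t => g t ≤ g q) := by simp
      have := hsub this
      simp only [mem_filter, mem_univ, true_and] at this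
      omega
  have Rinj : Function.Injective r := by
    intro p q h
    rcases lt_trichotomy (g p) (g q) with hlt | heq | hgt
    · have := Rmono p q hlt; omega
    · exact hg heq
    · have := Rmono q p hgt; omega
  have Rdiff : ∀ p q, g q ≤ g p → r p ≤ r q + (g p - g q).toNat := by
    intro p q h
    have hsub : univ.filter (fun t => g t ≤ g p) ⊆
        univ.filter (fun t => g t ≤ g q) ∪ univ.filter (fun t => g q < g t ∧ g t ≤ g p) := by
      intro t ht
      simp only [mem_filter, mem_union, mem_univ, true_and] at *
      omega
    have h1 : r p ≤ r q + #(univ.filter (fun t => g q < g t ∧ g t ≤ g p)) :=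
      le_trans (Finset.card_le_card hsub) (Finset.card_union_le _ _)
    have h2 : #(univ.filter (fun t => g q < g t ∧ g t ≤ g p)) ≤ (g p - g q).toNat := by
      have h3 : #(univ.filter (fun t => g q < g t ∧ g t ≤ g p)) ≤ #(Finset.Ioc (g q) (g p)) := by
        apply Finset.card_le_card_of_injOn g
        · intro t ht
          simp only [Finset.mem_coe, mem_filter, mem_univ, true_and] at ht
          exact Finset.mem_Ioc.2 ht
        · exact Function.Injective.injOn hg
      rwa [Int.card_Ioc] at h3
    omega
  set x : ℕ := (n-1)*(n-1)/4 + 1 with hx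
  have hxN : x ≤ n*n := by
    have h1 : (n-1)*(n-1) < n*n := by
      obtain ⟨d, rfl⟩ : ∃ d, n = d + 1 := ⟨n - 1, by omega⟩
      have e1 : (d+1)*(d+1) = d*d + 2*d + 1 := by ring
      have e2 : (d+1-1)*(d+1-1) = d*d := by simp
      omega
    have h2 : (n-1)*(n-1)/4 ≤ (n-1)*(n-1) := Nat.div_le_self _ _
    omega
  have himg : univ.image r = Finset.Icc 1 (n*n) := by
    apply Finset.eq_of_subset_of_card_le
    · intro v hv
      obtain ⟨p, _, rfl⟩ := Finset.mem_image.1 hv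
      exact Finset.mem_Icc.2 ⟨R1 p, R2 p⟩
    · rw [Nat.card_Icc, Finset.card_image_of_injective _ Rinj, hcard]
      omega
  set S := univ.filter (fun p => r p ≤ x) with hS
  have hScard : #S = x := by
    have h1 : Finset.filter (fun v => v ≤ x) (univ.image r) = S.image r := by
      rw [Finset.filter_image]
    have h2 : Finset.filter (fun v => v ≤ x) (Finset.Icc 1 (n*n)) = Finset.Icc 1 x := by
      ext v
      simp only [mem_filter, Finset.mem_Icc]
      omega
    have h3 : #(S.image r) = #(Finset.Icc 1 x) := by
      rw [← h1, himg, h2]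
    rw [Finset.card_image_of_injective _ Rinj] at h3
    rw [h3, Nat.card_Icc]
    omega
  set A := S.image Prod.fst with hA
  set B := S.image Prod.snd with hB
  have haN : #A ≤ n := le_trans (Finset.card_le_univ _) (by simp)
  have hbN : #B ≤ n := le_trans (Finset.card_le_univ _) (by simp)
  have hab : x ≤ #A * #B := by
    have hsub : S ⊆ A ×ˢ B := by
      intro p hp
      rw [Finset.mem_product]
      exact ⟨Finset.mem_image_of_mem _ hp, Finset.mem_image_of_mem _ hp⟩
    calc x = #S := hScard.symm
    _ ≤ #(A ×ˢ B) := Finset.card_le_card hsub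
    _ = #A * #B := Finset.card_product _ _
  have hkey : (n - #A)*(n - #B) ≤ n*n/4 := key_am _ _ haN hbN hab
  set T := univ.filter (fun p : Fin n × Fin n => p.1 ∈ A ∨ p.2 ∈ B) with hT
  have hTcard : #T + (n - #A)*(n - #B) = n*n := by
    have h2 : univ.filter (fun p : Fin n × Fin n => ¬(p.1 ∈ A ∨ p.2 ∈ B)) = Aᶜ ×ˢ Bᶜ := by
      ext p
      simp only [mem_filter, mem_univ, true_and, Finset.mem_product, Finset.mem_compl, not_or]
    have h3 := Finset.card_filter_add_card_filter_not
      (s := (univ : Finset (Fin n × Fin n))) (p := fun p => p.1 ∈ A ∨ p.2 ∈ B)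
    rw [h2] at h3
    rw [Finset.card_product, Finset.card_compl, Finset.card_compl] at h3
    simp only [Fintype.card_fin] at h3
    rw [hcard] at h3
    exact h3
  have harith := arith_main hn
  have hTbig : K + x ≤ #T := by
    have h4 : n*n/4 ≤ n*n := Nat.div_le_self _ _
    omega
  have hKpos := K_pos hn
  have hTne : T.Nonempty := by
    apply Finset.card_pos.1
    omega
  obtain ⟨e, heT, hemax⟩ := Finset.exists_max_image T r hTne
  have hre : #T ≤ r e := by
    have h1 : #T ≤ #(Finset.Icc 1 (r e)) := by
      apply Finset.card_le_card_of_injOn r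
      · intro t ht
        exact Finset.mem_Icc.2 ⟨R1 t, hemax t ht⟩
      · exact Function.Injective.injOn Rinj
    rwa [Nat.card_Icc, Nat.add_sub_cancel] at h1
  have heT' := heT
  rw [hT, mem_filter] at heT'
  have hwit : ∃ s ∈ S, e.1 = s.1 ∨ e.2 = s.2 := by
    rcases heT'.2 with h | h
    · obtain ⟨s, hsS, hs1⟩ := Finset.mem_image.1 h
      exact ⟨s, hsS, Or.inl hs1.symm⟩
    · obtain ⟨s, hsS, hs2⟩ := Finset.mem_image.1 h
      exact ⟨s, hsS, Or.inr hs2.symm⟩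
  obtain ⟨s, hsS, hline'⟩ := hwit
  have hrs : r s ≤ x := by
    rw [hS, mem_filter] at hsS
    exact hsS.2
  have hse : e ≠ s := by
    intro h
    rw [h] at hre
    omega
  have hnat : (g e - g s).natAbs ≤ k := hline e s hse hline'
  rcases le_or_gt (g s) (g e) with hle | hlt
  · have hd := Rdiff e s hle
    omega
  · have := Rmono e s hlt
    omega

/-! ### The even construction : n = 2m -/

def XE (m i j : ℕ) : ℕ := if j < m then i*m + j else 2*(m*m) + i*m + (j - m)

lemma XE_inj {m i j i' j' : ℕ} (hi : i < 2*m) (hj : j < 2*m) (hi' : i' < 2*m) (hj' : j' < 2*m)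
    (h : XE m i j = XE m i' j') : i = i' ∧ j = j' := by
  have hiB : i*m + m ≤ (2*m)*m := mulb hi
  have hiB' : i'*m + m ≤ (2*m)*m := mulb hi'
  have hmm : (2*m)*m = 2*(m*m) := by ring
  unfold XE at h
  split_ifs at h with h1 h2 h2
  · exact blk h1 h2 h
  · omega
  · omega
  · have h3 : i*m + (j-m) = i'*m + (j'-m) := by omega
    have := blk (show j - m < m by omega) (show j' - m < m by omega) h3
    omega

lemma XE_row {m i j : ℕ} (hm : 1 ≤ m) (hj : j < 2*m) :
    i*m ≤ XE m i j ∧ XE m i j ≤ i*m + (2*(m*m) + m - 1) := by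
  unfold XE
  split_ifs with h1
  · constructor
    · omega
    · have : 0 ≤ m*m := Nat.zero_le _
      omega
  · omega

lemma XE_col {m i j : ℕ} (hm : 1 ≤ m) (hi : i < 2*m) :
    (if j < m then j else 2*(m*m) + (j - m)) ≤ XE m i j ∧
    XE m i j ≤ (if j < m then j else 2*(m*m) + (j - m)) + (2*(m*m) + m - 1) := by
  have hiB : i*m + m ≤ (2*m)*m := mulb hi
  have hmm : (2*m)*m = 2*(m*m) := by ring
  unfold XE
  split_ifs with h1
  · omega
  · omega

/-! ### The odd construction : n = 2m+1 -/

def XO (m i j : ℕ) : ℕ :=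
  if j < m then
    (if i < m then j*m + i
     else if i = m then m*m + m + j
     else 2*(m*m) + 2*m + j*m + (i - (m+1)))
  else if j = m then
    (if i < m then m*m + i else 3*(m*m) + 2*m + (i - m))
  else
    (if i < m then m*m + 2*m + (j - (m+1))*m + i
     else if i = m then 3*(m*m) + 3*m + 1 + (j - (m+1))
     else 3*(m*m) + 4*m + 1 + (j - (m+1))*m + (i - (m+1)))

section OddLemmas
variable {m i j : ℕ}

lemma XO_00 (hj : j < m) (hi : i < m) : XO m i j = j*m + i := by
  simp [XO, hj, hi]
lemma XO_01 (hj : j < m) (hi : i = m) : XO m i j = m*m + m + j := by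
  simp [XO, hj, hi]
lemma XO_02 (hj : j < m) (hi : m < i) : XO m i j = 2*(m*m) + 2*m + j*m + (i - (m+1)) := by
  simp [XO, hj, (show ¬ i < m by omega), (show ¬ i = m by omega)]
lemma XO_10 (hj : j = m) (hi : i < m) : XO m i j = m*m + i := by
  simp [XO, hj, hi]
lemma XO_11 (hj : j = m) (hi : ¬ i < m) : XO m i j = 3*(m*m) + 2*m + (i - m) := by
  simp [XO, hj, hi]
lemma XO_20 (hj : m < j) (hi : i < m) : XO m i j = m*m + 2*m + (j - (m+1))*m + i := by
  simp [XO, (show ¬ j < m by omega), (show ¬ j = m by omega), hi]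
lemma XO_21 (hj : m < j) (hi : i = m) : XO m i j = 3*(m*m) + 3*m + 1 + (j - (m+1)) := by
  simp [XO, (show ¬ j < m by omega), (show ¬ j = m by omega), hi]
lemma XO_22 (hj : m < j) (hi : m < i) :
    XO m i j = 3*(m*m) + 4*m + 1 + (j - (m+1))*m + (i - (m+1)) := by
  simp [XO, (show ¬ j < m by omega), (show ¬ j = m by omega),
    (show ¬ i < m by omega), (show ¬ i = m by omega)]

def rloO (m i : ℕ) : ℕ := if i < m then i else if i = m then m*m + m else 2*(m*m) + m + i - 1
def cloO (m j : ℕ) : ℕ := if j < m then j*m else if j = m then m*m else m*m + 2*m + (j-(m+1))*m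

lemma XO_row (hi : i < 2*m+1) (hj : j < 2*m+1) :
    rloO m i ≤ XO m i j ∧ XO m i j ≤ rloO m i + (2*(m*m)+3*m) := by
  rcases lt_trichotomy j m with hj1 | hj1 | hj1 <;> rcases lt_trichotomy i m with hi1 | hi1 | hi1
  · rw [XO_00 hj1 hi1]; simp only [rloO, if_pos hi1]
    have := mulb (m := m) hj1; omega
  · rw [XO_01 hj1 hi1]; simp only [rloO, if_neg (by omega : ¬ i < m), if_pos hi1]; omega
  · rw [XO_02 hj1 hi1]
    simp only [rloO, if_neg (by omega : ¬ i < m), if_neg (by omega : ¬ i = m)]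
    have := mulb (m := m) hj1; omega
  · rw [XO_10 hj1 hi1]; simp only [rloO, if_pos hi1]; omega
  · rw [XO_11 hj1 (by omega)]; simp only [rloO, if_neg (by omega : ¬ i < m), if_pos hi1]; omega
  · rw [XO_11 hj1 (by omega)]
    simp only [rloO, if_neg (by omega : ¬ i < m), if_neg (by omega : ¬ i = m)]; omega
  · rw [XO_20 hj1 hi1]; simp only [rloO, if_pos hi1]
    have := mulb (m := m) (show j - (m+1) < m by omega); omega
  · rw [XO_21 hj1 hi1]; simp only [rloO, if_neg (by omega : ¬ i < m), if_pos hi1]; omega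
  · rw [XO_22 hj1 hi1]
    simp only [rloO, if_neg (by omega : ¬ i < m), if_neg (by omega : ¬ i = m)]
    have := mulb (m := m) (show j - (m+1) < m by omega); omega

lemma XO_col (hi : i < 2*m+1) (hj : j < 2*m+1) :
    cloO m j ≤ XO m i j ∧ XO m i j ≤ cloO m j + (2*(m*m)+3*m) := by
  rcases lt_trichotomy j m with hj1 | hj1 | hj1 <;> rcases lt_trichotomy i m with hi1 | hi1 | hi1
  · rw [XO_00 hj1 hi1]; simp only [cloO, if_pos hj1]; omega
  · rw [XO_01 hj1 hi1]; simp only [cloO, if_pos hj1]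
    have := mulb (m := m) hj1; omega
  · rw [XO_02 hj1 hi1]; simp only [cloO, if_pos hj1]; omega
  · rw [XO_10 hj1 hi1]; simp only [cloO, if_neg (by omega : ¬ j < m), if_pos hj1]; omega
  · rw [XO_11 hj1 (by omega)]; simp only [cloO, if_neg (by omega : ¬ j < m), if_pos hj1]; omega
  · rw [XO_11 hj1 (by omega)]; simp only [cloO, if_neg (by omega : ¬ j < m), if_pos hj1]; omega
  · rw [XO_20 hj1 hi1]; simp only [cloO, if_neg (by omega : ¬ j < m), if_neg (by omega : ¬ j = m)]
    omega
  · rw [XO_21 hj1 hi1]; simp only [cloO, if_neg (by omega : ¬ j < m), if_neg (by omega : ¬ j = m)]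
    have := mulb (m := m) (show j - (m+1) < m by omega); omega
  · rw [XO_22 hj1 hi1]; simp only [cloO, if_neg (by omega : ¬ j < m), if_neg (by omega : ¬ j = m)]
    have := mulb (m := m) (show j - (m+1) < m by omega); omega

def invO (m v : ℕ) : ℕ × ℕ :=
  if v < m*m then (v % m, v / m)
  else if v < m*m + m then (v - m*m, m)
  else if v < m*m + 2*m then (m, v - (m*m + m))
  else if v < 2*(m*m) + 2*m then ((v - (m*m + 2*m)) % m, m + 1 + (v - (m*m + 2*m)) / m)
  else if v < 3*(m*m) + 2*m then (m + 1 + (v - (2*(m*m) + 2*m)) % m, (v - (2*(m*m) + 2*m)) / m)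
  else if v < 3*(m*m) + 3*m + 1 then (v - (3*(m*m) + 2*m) + m, m)
  else if v < 3*(m*m) + 4*m + 1 then (m, v - (3*(m*m) + 3*m + 1) + m + 1)
  else (m + 1 + (v - (3*(m*m) + 4*m + 1)) % m, m + 1 + (v - (3*(m*m) + 4*m + 1)) / m)

lemma divmod_pair {a b : ℕ} (hb : b < m) : (a*m + b) % m = b ∧ (a*m + b) / m = a := by
  have hm : 0 < m := by omega
  constructor
  · rw [Nat.mul_comm a m, Nat.mul_add_mod]
    exact Nat.mod_eq_of_lt hb
  · rw [Nat.mul_comm a m, Nat.mul_add_div hm, Nat.div_eq_of_lt hb]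
    omega

lemma invXO (hi : i < 2*m+1) (hj : j < 2*m+1) : invO m (XO m i j) = (i, j) := by
  rcases lt_trichotomy j m with hj1 | hj1 | hj1 <;> rcases lt_trichotomy i m with hi1 | hi1 | hi1
  · have hx : XO m i j = j*m + i := XO_00 hj1 hi1
    have hlt : j*m + i < m*m := by have := mulb (m := m) hj1; omega
    have hd := divmod_pair (m := m) (a := j) (b := i) hi1
    rw [hx]; unfold invO
    rw [if_pos hlt]
    simp [hd.1, hd.2]
  · have hx : XO m i j = m*m + m + j := XO_01 hj1 hi1
    rw [hx]; unfold invO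
    rw [if_neg (by omega), if_neg (by omega), if_pos (by omega)]
    simp; omega
  · have hx : XO m i j = 2*(m*m) + 2*m + j*m + (i - (m+1)) := XO_02 hj1 hi1
    have hjm := mulb (m := m) hj1
    have hs : i - (m+1) < m := by omega
    have hd := divmod_pair (m := m) (a := j) (b := i - (m+1)) hs
    rw [hx]; unfold invO
    rw [if_neg (by omega), if_neg (by omega), if_neg (by omega), if_neg (by omega),
      if_pos (by omega)]
    have he : 2*(m*m) + 2*m + j*m + (i - (m+1)) - (2*(m*m) + 2*m) = j*m + (i - (m+1)) := by omega
    rw [he, hd.1, hd.2]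
    simp; omega
  · have hx : XO m i j = m*m + i := XO_10 hj1 hi1
    rw [hx]; unfold invO
    rw [if_neg (by omega), if_pos (by omega)]
    simp; omega
  · have hx : XO m i j = 3*(m*m) + 2*m + (i - m) := XO_11 hj1 (by omega)
    rw [hx]; unfold invO
    rw [if_neg (by omega), if_neg (by omega), if_neg (by omega), if_neg (by omega),
      if_neg (by omega), if_pos (by omega)]
    simp; omega
  · have hx : XO m i j = 3*(m*m) + 2*m + (i - m) := XO_11 hj1 (by omega)
    rw [hx]; unfold invO
    rw [if_neg (by omega), if_neg (by omega), if_neg (by omega), if_neg (by omega),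
      if_neg (by omega), if_pos (by omega)]
    simp; omega
  · have hx : XO m i j = m*m + 2*m + (j - (m+1))*m + i := XO_20 hj1 hi1
    have ht : j - (m+1) < m := by omega
    have htm := mulb (m := m) ht
    have hd := divmod_pair (m := m) (a := j - (m+1)) (b := i) hi1
    rw [hx]; unfold invO
    rw [if_neg (by omega), if_neg (by omega), if_neg (by omega), if_pos (by omega)]
    have he : m*m + 2*m + (j - (m+1))*m + i - (m*m + 2*m) = (j - (m+1))*m + i := by omega
    rw [he, hd.1, hd.2]
    simp; omega
  · have hx : XO m i j = 3*(m*m) + 3*m + 1 + (j - (m+1)) := XO_21 hj1 hi1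
    rw [hx]; unfold invO
    rw [if_neg (by omega), if_neg (by omega), if_neg (by omega), if_neg (by omega),
      if_neg (by omega), if_neg (by omega), if_pos (by omega)]
    simp; omega
  · have hx : XO m i j = 3*(m*m) + 4*m + 1 + (j - (m+1))*m + (i - (m+1)) := XO_22 hj1 hi1
    have ht : j - (m+1) < m := by omega
    have htm := mulb (m := m) ht
    have hs : i - (m+1) < m := by omega
    have hd := divmod_pair (m := m) (a := j - (m+1)) (b := i - (m+1)) hs
    rw [hx]; unfold invO
    rw [if_neg (by omega), if_neg (by omega), if_neg (by omega), if_neg (by omega),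
      if_neg (by omega), if_neg (by omega), if_neg (by omega)]
    have he : 3*(m*m) + 4*m + 1 + (j - (m+1))*m + (i - (m+1)) - (3*(m*m) + 4*m + 1)
        = (j - (m+1))*m + (i - (m+1)) := by omega
    rw [he, hd.1, hd.2]
    simp; omega

lemma XO_inj {i' j' : ℕ} (hi : i < 2*m+1) (hj : j < 2*m+1) (hi' : i' < 2*m+1) (hj' : j' < 2*m+1)
    (h : XO m i j = XO m i' j') : i = i' ∧ j = j' := by
  have h1 := invXO hi hj
  have h2 := invXO hi' hj'
  rw [h] at h1
  rw [h1] at h2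
  exact ⟨(Prod.ext_iff.1 h2).1, (Prod.ext_iff.1 h2).2⟩

end OddLemmas

/-! ### The labeling existence, both parities -/

lemma exists_L (hn : 1 ≤ n) : ∃ L : Fin n → Fin n → ℕ,
    (∀ i j i' j' : Fin n, L i j = L i' j' → i = i' ∧ j = j') ∧
    (∀ i j j' : Fin n, L i j ≤ L i j' + (n*(n+1)/2 - 1)) ∧
    (∀ i j i' : Fin n, L i j ≤ L i' j + (n*(n+1)/2 - 1)) := by
  rcases Nat.even_or_odd n with ⟨m, hm⟩ | ⟨m, hm⟩
  · -- even : n = m + m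
    have hm1 : 1 ≤ m := by omega
    have e1 : (m+m)*((m+m)+1) = 4*(m*m)+2*m := by ring
    have hKval : n*(n+1)/2 - 1 = 2*(m*m) + m - 1 := by rw [hm]; omega
    have hfin : ∀ i : Fin n, (i : ℕ) < 2*m := by
      intro i; have := i.isLt; omega
    refine ⟨fun i j => XE m i j, ?_, ?_, ?_⟩
    · intro i j i' j' h
      change XE m (i:ℕ) (j:ℕ) = XE m (i':ℕ) (j':ℕ) at h
      obtain ⟨h1, h2⟩ := XE_inj (hfin i) (hfin j) (hfin i') (hfin j') h
      exact ⟨Fin.ext h1, Fin.ext h2⟩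
    · intro i j j'
      have r1 := XE_row (i := (i:ℕ)) hm1 (hfin j)
      have r2 := XE_row (i := (i:ℕ)) hm1 (hfin j')
      show XE m (i:ℕ) (j:ℕ) ≤ XE m (i:ℕ) (j':ℕ) + (n*(n+1)/2 - 1)
      rw [hKval]
      omega
    · intro i j i'
      have c1 := XE_col (j := (j:ℕ)) hm1 (hfin i)
      have c2 := XE_col (j := (j:ℕ)) hm1 (hfin i')
      show XE m (i:ℕ) (j:ℕ) ≤ XE m (i':ℕ) (j:ℕ) + (n*(n+1)/2 - 1)
      rw [hKval]
      omega
  · -- odd : n = 2m+1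
    have e1 : (2*m+1)*((2*m+1)+1) = 4*(m*m)+6*m+2 := by ring
    have hKval : n*(n+1)/2 - 1 = 2*(m*m) + 3*m := by rw [hm]; omega
    have hfin : ∀ i : Fin n, (i : ℕ) < 2*m+1 := by
      intro i; have := i.isLt; omega
    refine ⟨fun i j => XO m i j, ?_, ?_, ?_⟩
    · intro i j i' j' h
      change XO m (i:ℕ) (j:ℕ) = XO m (i':ℕ) (j':ℕ) at h
      obtain ⟨h1, h2⟩ := XO_inj (hfin i) (hfin j) (hfin i') (hfin j') h
      exact ⟨Fin.ext h1, Fin.ext h2⟩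
    · intro i j j'
      have r1 := XO_row (hfin i) (hfin j)
      have r2 := XO_row (hfin i) (hfin j')
      show XO m (i:ℕ) (j:ℕ) ≤ XO m (i:ℕ) (j':ℕ) + (n*(n+1)/2 - 1)
      rw [hKval]
      omega
    · intro i j i'
      have c1 := XO_col (hfin i) (hfin j)
      have c2 := XO_col (hfin i') (hfin j)
      show XO m (i:ℕ) (j:ℕ) ≤ XO m (i':ℕ) (j:ℕ) + (n*(n+1)/2 - 1)
      rw [hKval]
      omega

/-! ### Upper bound membership -/

def pairF (L : Fin n → Fin n → ℕ) :
    {f : (Fin n ⊕ Fin n) → (Fin n ⊕ Fin n) → ℤ // ∀ a b, f a b = f b a} :=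
  ⟨fun u v => match u, v with
    | .inl i, .inr j => (L i j : ℤ)
    | .inr j, .inl i => (L i j : ℤ)
    | _, _ => 0,
   by intro a b; rcases a with i|i <;> rcases b with j|j <;> rfl⟩

lemma pairF_apply (L : Fin n → Fin n → ℕ) (i j : Fin n) :
    Sym2.lift (pairF L) ((edg i j : (completeBipartiteGraph (Fin n) (Fin n)).edgeSet) :
      Sym2 (Fin n ⊕ Fin n)) = (L i j : ℤ) := by
  rfl

theorem upper_mem (K : ℕ) (L : Fin n → Fin n → ℕ)
    (hinj : ∀ i j i' j' : Fin n, L i j = L i' j' → i = i' ∧ j = j')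
    (hrow : ∀ i j j' : Fin n, L i j ≤ L i j' + K)
    (hcol : ∀ i j i' : Fin n, L i j ≤ L i' j + K) :
    K ∈ {k : ℕ | ∃ f : (completeBipartiteGraph (Fin n) (Fin n)).edgeSet → ℤ,
      Function.Injective f ∧
      ∀ e e' : (completeBipartiteGraph (Fin n) (Fin n)).edgeSet,
        e ≠ e' → (∃ v, v ∈ (e : Sym2 (Fin n ⊕ Fin n)) ∧ v ∈ (e' : Sym2 (Fin n ⊕ Fin n))) →
        ((f e - f e').natAbs ≤ k)} := by
  refine ⟨fun e => Sym2.lift (pairF L) (e : Sym2 (Fin n ⊕ Fin n)), ?_, ?_⟩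
  · intro e e' h
    obtain ⟨i, j, rfl⟩ := edge_repr e
    obtain ⟨i', j', rfl⟩ := edge_repr e'
    simp only [pairF_apply] at h
    have h2 := hinj i j i' j' (by exact_mod_cast h)
    exact edg_inj_iff.2 h2
  · intro e e' hne hshare
    obtain ⟨i, j, rfl⟩ := edge_repr e
    obtain ⟨i', j', rfl⟩ := edge_repr e'
    obtain ⟨v, hv, hv'⟩ := hshare
    rw [mem_edg] at hv hv'
    simp only [pairF_apply]
    rcases hv with rfl | rfl <;> rcases hv' with h2 | h2
    · have hii : i = i' := Sum.inl.inj h2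
      subst hii
      have c1 : (L i j : ℤ) ≤ (L i j' : ℤ) + K := by exact_mod_cast hrow i j j'
      have c2 : (L i j' : ℤ) ≤ (L i j : ℤ) + K := by exact_mod_cast hrow i j' j
      omega
    · exact absurd h2 (by simp)
    · exact absurd h2.symm (by simp)
    · have hjj : j = j' := Sum.inr.inj h2
      subst hjj
      have c1 : (L i j : ℤ) ≤ (L i' j : ℤ) + K := by exact_mod_cast hcol i j i'
      have c2 : (L i' j : ℤ) ≤ (L i j : ℤ) + K := by exact_mod_cast hcol i' j i
      omega

end EBW

theorem edgeBW_completeBipartite (n : ℕ) (hn : 1 ≤ n) :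
    edgeBW (completeBipartiteGraph (Fin n) (Fin n)) = (n + 1).choose 2 - 1 := by
  have hch : (n + 1).choose 2 - 1 = n*(n+1)/2 - 1 := by
    rw [Nat.choose_two_right]
    have h1 : (n+1) * ((n+1) - 1) = n * (n+1) := by
      have : (n+1) - 1 = n := by omega
      rw [this, Nat.mul_comm]
    rw [h1]
  obtain ⟨L, hinj, hrow, hcol⟩ := EBW.exists_L hn
  have hmem := EBW.upper_mem (n*(n+1)/2 - 1) L hinj hrow hcol
  rw [hch]
  unfold edgeBW
  apply le_antisymm
  · exact Nat.sInf_le hmem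
  · apply le_csInf ⟨_, hmem⟩
    intro k hk
    rcases Nat.lt_or_ge n 2 with h2 | h2
    · have hn1 : n = 1 := by omega
      subst hn1
      norm_num
    · obtain ⟨f, hfinj, hfprop⟩ := hk
      have hginj : Function.Injective (fun p : Fin n × Fin n => f (EBW.edg p.1 p.2)) := by
        intro p q h
        have h3 := hfinj h
        rw [EBW.edg_inj_iff] at h3
        exact Prod.ext h3.1 h3.2
      have hline : ∀ p q : Fin n × Fin n, p ≠ q → (p.1 = q.1 ∨ p.2 = q.2) →
          ((f (EBW.edg p.1 p.2) - f (EBW.edg q.1 q.2)).natAbs ≤ k) := by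
        intro p q hne hsh
        have hedne : EBW.edg p.1 p.2 ≠ EBW.edg q.1 q.2 := by
          rw [Ne, EBW.edg_inj_iff]
          intro h; exact hne (Prod.ext h.1 h.2)
        apply hfprop _ _ hedne
        rcases hsh with h | h
        · exact ⟨Sum.inl p.1, EBW.mem_edg.2 (Or.inl rfl), EBW.mem_edg.2 (Or.inl (by rw [h]))⟩
        · exact ⟨Sum.inr p.2, EBW.mem_edg.2 (Or.inr rfl), EBW.mem_edg.2 (Or.inr (by rw [h]))⟩
      exact EBW.core_lower h2 k _ hginj hline
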